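/- Let S be a saturated Hopf C*-algebra and A an S-invariant subalgebra of the convolution algebra S*. Then any bounded left σ(S*,S)-approximate identity of A is automatically a bounded two-sided σ(S*,S)-approximate identity of A. -/

import Mathlib

open Filter Topology

/-- A (saturated) Hopf C*-algebra structure on a C*-algebra `S`, encoded through the
slice maps of the comultiplication `δ : S → M(S ⊗ S)`:
`sliceR f = (id ⊗ f) ∘ δ` and `sliceL f = (f ⊗ id) ∘ δ`.  The convolution product on
the dual `S*` is `f ★ g = (f ⊗ g) ∘ δ = f ∘ sliceR g = g ∘ sliceL f`.  Saturation is
encoded via its functional form: for every nonzero `S`-invariant subspace `N` of `S*`,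
the span of the slices `(id ⊗ g) δ(r)` (resp. `(g ⊗ id) δ(r)`), `g ∈ N`, `r ∈ S`, is
dense in `S`. -/
structure HopfCStarStructure (S : Type) [NonUnitalNormedRing S] [StarRing S] [CStarRing S]
    [NormedSpace ℂ S] [IsScalarTower ℂ S S] [SMulCommClass ℂ S S] [StarModule ℂ S]
    [CompleteSpace S] where
  sliceR : (S →L[ℂ] ℂ) →ₗ[ℂ] (S →L[ℂ] S)
  sliceL : (S →L[ℂ] ℂ) →ₗ[ℂ] (S →L[ℂ] S)
  norm_sliceR : ∀ (f : S →L[ℂ] ℂ) (r : S), ‖sliceR f r‖ ≤ ‖f‖ * ‖r‖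
  norm_sliceL : ∀ (f : S →L[ℂ] ℂ) (r : S), ‖sliceL f r‖ ≤ ‖f‖ * ‖r‖
  conv_eq : ∀ (f g : S →L[ℂ] ℂ) (r : S), f (sliceR g r) = g (sliceL f r)
  sliceR_conv : ∀ f g : S →L[ℂ] ℂ,
    (sliceR f).comp (sliceR g) = sliceR (f.comp (sliceR g))
  sliceL_conv : ∀ f g : S →L[ℂ] ℂ,
    (sliceL g).comp (sliceL f) = sliceL (f.comp (sliceR g))
  slice_comm : ∀ f g : S →L[ℂ] ℂ,
    (sliceL f).comp (sliceR g) = (sliceR g).comp (sliceL f)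
  saturatedR : ∀ N : Submodule ℂ (S →L[ℂ] ℂ), N ≠ ⊥ →
    (∀ f ∈ N, ∀ s : S, f.comp (ContinuousLinearMap.mul ℂ S s) ∈ N ∧
        f.comp ((ContinuousLinearMap.mul ℂ S).flip s) ∈ N) →
    Dense (↑(Submodule.span ℂ {x : S | ∃ f ∈ N, ∃ r : S, x = sliceR f r}) : Set S)
  saturatedL : ∀ N : Submodule ℂ (S →L[ℂ] ℂ), N ≠ ⊥ →
    (∀ f ∈ N, ∀ s : S, f.comp (ContinuousLinearMap.mul ℂ S s) ∈ N ∧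
        f.comp ((ContinuousLinearMap.mul ℂ S).flip s) ∈ N) →
    Dense (↑(Submodule.span ℂ {x : S | ∃ f ∈ N, ∃ r : S, x = sliceL f r}) : Set S)

/-- The convolution product `f ★ g = (f ⊗ g) ∘ δ` on the dual of a Hopf C*-algebra. -/
noncomputable def HopfCStarStructure.conv {S : Type} [NonUnitalNormedRing S] [StarRing S] [CStarRing S]
    [NormedSpace ℂ S] [IsScalarTower ℂ S S] [SMulCommClass ℂ S S] [StarModule ℂ S]
    [CompleteSpace S] (h : HopfCStarStructure S) (f g : S →L[ℂ] ℂ) : S →L[ℂ] ℂ :=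
  f.comp (h.sliceR g)

/-- Let `A` be an `S`-invariant subalgebra of the convolution algebra
`S*`.  Any bounded left `σ(S*,S)`-approximate identity of `A` is automatically a
bounded two-sided `σ(S*,S)`-approximate identity of `A`. -/
theorem left_weakstar_approx_id_is_two_sided
    (S : Type) [NonUnitalNormedRing S] [StarRing S] [CStarRing S]
    [NormedSpace ℂ S] [IsScalarTower ℂ S S] [SMulCommClass ℂ S S] [StarModule ℂ S]
    [CompleteSpace S] (h : HopfCStarStructure S)
    (A : Submodule ℂ (S →L[ℂ] ℂ))
    (hA_alg : ∀ f ∈ A, ∀ g ∈ A, h.conv f g ∈ A)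
    (hA_inv : ∀ f ∈ A, ∀ s : S, f.comp (ContinuousLinearMap.mul ℂ S s) ∈ A ∧
        f.comp ((ContinuousLinearMap.mul ℂ S).flip s) ∈ A)
    (ι : Type) (l : Filter ι) [l.NeBot] (f : ι → (S →L[ℂ] ℂ))
    (hmem : ∀ i, f i ∈ A) (hbdd : ∃ C : ℝ, ∀ i, ‖f i‖ ≤ C)
    (hleft : ∀ g ∈ A, ∀ s : S, Tendsto (fun i => h.conv (f i) g s) l (𝓝 (g s))) :
    ∀ g ∈ A, ∀ s : S, Tendsto (fun i => h.conv g (f i) s) l (𝓝 (g s)) := by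
  intro g hg s
  have hfun : ∀ i, h.conv g (f i) s = (f i) (h.sliceL g s) := fun i => h.conv_eq g (f i) s
  simp only [hfun]
  by_cases hbot : A = ⊥
  · subst hbot
    have : g = 0 := by simpa using hg
    subst this
    simp
  · have hD := h.saturatedR A hbot hA_inv
    obtain ⟨C, hC⟩ := hbdd
    set C0 := max C 0 with hC0def
    have hC0 : ∀ i, ‖f i‖ ≤ C0 := fun i => le_trans (hC i) (le_max_left _ _)
    have hC0' : (0:ℝ) ≤ C0 := le_max_right _ _
    have key : ∀ x ∈ Submodule.span ℂ {x : S | ∃ f ∈ A, ∃ r : S, x = h.sliceR f r},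
        Tendsto (fun i => f i (h.sliceL g x)) l (𝓝 (g x)) := by
      intro x hx
      induction hx using Submodule.span_induction with
      | mem x hx =>
          obtain ⟨g', hg', r, rfl⟩ := hx
          have h1 : h.sliceL g (h.sliceR g' r) = h.sliceR g' (h.sliceL g r) :=
            congrFun (congrArg DFunLike.coe (h.slice_comm g g')) r
          have h2 : g (h.sliceR g' r) = g' (h.sliceL g r) := h.conv_eq g g' r
          rw [h2]
          simp only [h1]
          simpa [HopfCStarStructure.conv] using hleft g' hg' (h.sliceL g r)
      | zero => simp
      | add x y hx hy ihx ihy => simpa [map_add] using ihx.add ihy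
      | smul a x hx ih => simpa [map_smul] using ih.const_smul a
    rw [Metric.tendsto_nhds]
    intro ε hε
    set K := C0 * ‖g‖ + ‖g‖ with hKdef
    have hK : (0:ℝ) ≤ K := by positivity
    have hδ : (0:ℝ) < ε / (2 * (K + 1)) := by positivity
    obtain ⟨y, hyball, hyD⟩ := Metric.dense_iff.mp hD s _ hδ
    have hyd : ‖s - y‖ < ε / (2 * (K + 1)) := by
      rw [← dist_eq_norm, dist_comm]; simpa using hyball
    have h2 := (Metric.tendsto_nhds.mp (key y hyD)) (ε / 2) (by positivity)
    filter_upwards [h2] with i hi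
    have e1 : ‖f i (h.sliceL g s) - f i (h.sliceL g y)‖ ≤ C0 * (‖g‖ * ‖s - y‖) := by
      rw [← map_sub, ← map_sub]
      calc ‖f i (h.sliceL g (s - y))‖ ≤ ‖f i‖ * ‖h.sliceL g (s - y)‖ := (f i).le_opNorm _
        _ ≤ C0 * (‖g‖ * ‖s - y‖) :=
            mul_le_mul (hC0 i) (h.norm_sliceL g (s - y)) (norm_nonneg _) hC0'
    have e2 : ‖g y - g s‖ ≤ ‖g‖ * ‖s - y‖ := by
      rw [← map_sub]
      calc ‖g (y - s)‖ ≤ ‖g‖ * ‖y - s‖ := g.le_opNorm _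
        _ = ‖g‖ * ‖s - y‖ := by rw [norm_sub_rev]
    have tri : dist (f i (h.sliceL g s)) (g s) ≤
        ‖f i (h.sliceL g s) - f i (h.sliceL g y)‖ + dist (f i (h.sliceL g y)) (g y)
          + ‖g y - g s‖ := by
      simpa [dist_eq_norm] using
        dist_triangle4 (f i (h.sliceL g s)) (f i (h.sliceL g y)) (g y) (g s)
    have hmul : K * ‖s - y‖ ≤ (K + 1) * (ε / (2 * (K + 1))) :=
      mul_le_mul (by linarith) (le_of_lt hyd) (norm_nonneg _) (by positivity)
    have heq : (K + 1) * (ε / (2 * (K + 1))) = ε / 2 := by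
      field_simp
    have : C0 * (‖g‖ * ‖s - y‖) + ‖g‖ * ‖s - y‖ = K * ‖s - y‖ := by ring
    linarith
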